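/- For all r > 0 and μ > 0, the integral ∫₀ʳ (2μ r / √(r² - y²))·exp(-2μ√(r² - y²)) dy equals (π r μ)·(I₀(2rμ) - L₀(2rμ)), where I₀ is the modified Bessel function of the first kind of order 0 and L₀ is the modified Struve function of order 0. -/

import Mathlib

open Real MeasureTheory

/-- Modified Bessel function of the first kind of integer order `n`. -/
noncomputable def besselI (n : ℕ) (x : ℝ) : ℝ :=
  ∑' k : ℕ, (x / 2) ^ (2 * k + n) / ((Nat.factorial k : ℝ) * (Nat.factorial (k + n) : ℝ))

/-- Modified Struve function of real order `ν`. -/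
noncomputable def struveL (ν : ℝ) (x : ℝ) : ℝ :=
  ∑' k : ℕ, (x / 2) ^ (2 * (k : ℝ) + ν + 1) /
    (Real.Gamma ((k : ℝ) + 3 / 2) * Real.Gamma ((k : ℝ) + ν + 3 / 2))

lemma wallis_step (n : ℕ) : (∫ x in (0:ℝ)..(π/2), Real.cos x ^ (n+2)) =
    ((n:ℝ)+1)/((n:ℝ)+2) * ∫ x in (0:ℝ)..(π/2), Real.cos x ^ n := by
  rw [integral_cos_pow]
  simp

lemma wallis_even (k : ℕ) : (∫ x in (0:ℝ)..(π/2), Real.cos x ^ (2*k)) =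
    π/2 * (Nat.factorial (2*k)) / (4^k * (Nat.factorial k : ℝ)^2) := by
  induction k with
  | zero => simp
  | succ k ih =>
    have h2 : 2*(k+1) = 2*k + 2 := by ring
    rw [h2, wallis_step, ih]
    have e1 : ((2*(k+1)).factorial : ℝ) = (2*k+2) * ((2*k+1) * ((2*k).factorial : ℝ)) := by
      rw [show 2*(k+1) = (2*k+1)+1 by ring, Nat.factorial_succ, Nat.factorial_succ]
      push_cast; ring
    rw [show 2*k+2 = 2*(k+1) by ring, e1]
    have e2 : ((k+1).factorial : ℝ) = (k+1) * (k.factorial : ℝ) := by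
      rw [Nat.factorial_succ]; push_cast; ring
    rw [e2]
    have h4 : (4:ℝ)^k ≠ 0 := by positivity
    have hf : (k.factorial : ℝ) ≠ 0 := Nat.cast_ne_zero.mpr k.factorial_ne_zero
    push_cast
    field_simp
    ring

lemma wallis_odd (k : ℕ) : (∫ x in (0:ℝ)..(π/2), Real.cos x ^ (2*k+1)) =
    4^k * (Nat.factorial k : ℝ)^2 / (Nat.factorial (2*k+1)) := by
  induction k with
  | zero => simp
  | succ k ih =>
    have h2 : 2*(k+1)+1 = (2*k+1) + 2 := by ring
    rw [h2, wallis_step, ih]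
    have e1 : ((2*(k+1)+1).factorial : ℝ) = (2*k+3) * ((2*k+2) * ((2*k+1).factorial : ℝ)) := by
      rw [show 2*(k+1)+1 = ((2*k+1)+1)+1 by ring, Nat.factorial_succ, Nat.factorial_succ]
      push_cast; ring
    rw [show (2*k+1)+2 = 2*(k+1)+1 by ring, e1]
    have e2 : ((k+1).factorial : ℝ) = (k+1) * (k.factorial : ℝ) := by
      rw [Nat.factorial_succ]; push_cast; ring
    rw [e2]
    have hf : (k.factorial : ℝ) ≠ 0 := Nat.cast_ne_zero.mpr k.factorial_ne_zero
    have hg : ((2*k+1).factorial : ℝ) ≠ 0 := Nat.cast_ne_zero.mpr (2*k+1).factorial_ne_zero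
    push_cast
    field_simp
    ring
open Real

lemma gamma_add_three_halves (k : ℕ) :
    Real.Gamma ((k:ℝ) + 3/2) = Real.sqrt π * ((2*k+1).factorial : ℝ) / (4^k * (k.factorial : ℝ) * 2) := by
  induction k with
  | zero =>
    have : ((0:ℕ):ℝ) + 3/2 = 1/2 + 1 := by norm_num
    rw [this, Real.Gamma_add_one (by norm_num), Real.Gamma_one_half_eq]
    norm_num; ring
  | succ k ih =>
    have h1 : ((k+1:ℕ):ℝ) + 3/2 = ((k:ℝ) + 3/2) + 1 := by push_cast; ring
    rw [h1, Real.Gamma_add_one (by positivity), ih]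
    have e1 : (((2*(k+1)+1).factorial : ℕ) : ℝ) = (2*(k:ℝ)+3) * ((2*(k:ℝ)+2) * ((2*k+1).factorial : ℝ)) := by
      rw [show 2*(k+1)+1 = ((2*k+1)+1)+1 by ring, Nat.factorial_succ, Nat.factorial_succ]
      push_cast; ring
    have e2 : (((k+1).factorial : ℕ) : ℝ) = ((k:ℝ)+1) * (k.factorial : ℝ) := by
      rw [Nat.factorial_succ]; push_cast; ring
    rw [e1, e2]
    have hf : (k.factorial : ℝ) ≠ 0 := Nat.cast_ne_zero.mpr k.factorial_ne_zero
    have h4 : (4:ℝ)^k ≠ 0 := by positivity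
    generalize ((2*k+1).factorial : ℝ) = a at *
    generalize (k.factorial : ℝ) = b at *
    field_simp
    ring
open Real MeasureTheory

-- step 1: expansion of the integral as a series
lemma exp_cos_integral_eq_tsum (z : ℝ) (hz : 0 < z) :
    (∫ x in (0:ℝ)..(π/2), Real.exp (-z * Real.cos x)) =
      ∑' n : ℕ, (-z)^n / (n.factorial : ℝ) * ∫ x in (0:ℝ)..(π/2), Real.cos x ^ n := by
  have hpi : (0:ℝ) ≤ π/2 := by positivity
  have hb : ∀ (n : ℕ) (x : ℝ), ‖(-z * Real.cos x)^n / (n.factorial : ℝ)‖ ≤ z^n / n.factorial := by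
    intro n x
    rw [Real.norm_eq_abs, abs_div, abs_pow, Nat.abs_cast]
    gcongr
    rw [abs_mul, abs_neg, abs_of_pos hz]
    calc z * |Real.cos x| ≤ z * 1 := by gcongr; exact Real.abs_cos_le_one x
    _ = z := mul_one z
  have key : (∫ x in Set.Ioc (0:ℝ) (π/2), ∑' n : ℕ, (-z * Real.cos x)^n / (n.factorial : ℝ))
      = ∑' n : ℕ, ∫ x in Set.Ioc (0:ℝ) (π/2), (-z * Real.cos x)^n / (n.factorial : ℝ) := by
    apply MeasureTheory.integral_tsum
    · intro n
      exact (Continuous.aestronglyMeasurable (by fun_prop))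
    · have hle : ∀ n : ℕ, (∫⁻ x in Set.Ioc (0:ℝ) (π/2), ‖(-z * Real.cos x)^n / (n.factorial : ℝ)‖₊)
          ≤ ENNReal.ofReal (z^n / n.factorial * (π/2)) := by
        intro n
        calc (∫⁻ x in Set.Ioc (0:ℝ) (π/2), ‖(-z * Real.cos x)^n / (n.factorial : ℝ)‖₊)
            ≤ ∫⁻ _ in Set.Ioc (0:ℝ) (π/2), ENNReal.ofReal (z^n / n.factorial) := by
              apply MeasureTheory.lintegral_mono
              intro x
              simp only [← enorm_eq_nnnorm, ← ofReal_norm]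
              exact ENNReal.ofReal_le_ofReal (hb n x)
          _ = ENNReal.ofReal (z^n / n.factorial) * volume (Set.Ioc (0:ℝ) (π/2)) :=
              MeasureTheory.setLIntegral_const _ _
          _ = ENNReal.ofReal (z^n / n.factorial * (π/2)) := by
              rw [Real.volume_Ioc, ← ENNReal.ofReal_mul (by positivity)]
              norm_num
      have hsum : Summable (fun n : ℕ => z^n / (n.factorial : ℝ) * (π/2)) :=
        (Real.summable_pow_div_factorial z).mul_right _
      have fin : ∑' n : ℕ, (∫⁻ x in Set.Ioc (0:ℝ) (π/2), ‖(-z * Real.cos x)^n / (n.factorial : ℝ)‖₊)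
          ≤ ENNReal.ofReal (∑' n : ℕ, z^n / n.factorial * (π/2)) := by
        rw [ENNReal.ofReal_tsum_of_nonneg (fun n => by positivity) hsum]
        exact ENNReal.tsum_le_tsum hle
      exact (lt_of_le_of_lt fin ENNReal.ofReal_lt_top).ne
  have hexp : ∀ x : ℝ, Real.exp (-z * Real.cos x) = ∑' n : ℕ, (-z * Real.cos x)^n / (n.factorial : ℝ) := by
    intro x
    rw [Real.exp_eq_exp_ℝ, NormedSpace.exp_eq_tsum_div]
  rw [intervalIntegral.integral_of_le hpi]
  simp_rw [hexp]
  rw [key]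
  congr 1
  funext n
  rw [← intervalIntegral.integral_of_le hpi]
  have : ∀ x : ℝ, (-z * Real.cos x)^n / (n.factorial : ℝ)
      = ((-z)^n / (n.factorial : ℝ)) * Real.cos x ^ n := by
    intro x; rw [mul_pow]; ring
  simp_rw [this]
  rw [intervalIntegral.integral_const_mul]

lemma integral_exp_neg_cos (z : ℝ) (hz : 0 < z) :
    (∫ x in (0:ℝ)..(π/2), Real.exp (-z * Real.cos x)) =
      π/2 * (besselI 0 z - struveL 0 z) := by
  rw [exp_cos_integral_eq_tsum z hz]
  set g : ℕ → ℝ := fun n => (-z)^n / (n.factorial : ℝ) * ∫ x in (0:ℝ)..(π/2), Real.cos x ^ n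
    with hgdef
  have hgs : Summable g := by
    apply Summable.of_norm_bounded ((Real.summable_pow_div_factorial z).mul_right (π/2))
    intro n
    rw [hgdef, norm_mul]
    have h1 : ‖(-z)^n / (n.factorial:ℝ)‖ = z^n / n.factorial := by
      rw [Real.norm_eq_abs, abs_div, abs_pow, abs_neg, abs_of_pos hz, Nat.abs_cast]
    have h2 : ‖∫ x in (0:ℝ)..(π/2), Real.cos x ^ n‖ ≤ π/2 := by
      have := intervalIntegral.norm_integral_le_of_norm_le_const (C := 1) (a := (0:ℝ))
        (b := π/2) (f := fun x => Real.cos x ^ n) (fun x _ => by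
          rw [Real.norm_eq_abs, abs_pow]
          exact pow_le_one₀ (abs_nonneg _) (Real.abs_cos_le_one x))
      simpa [abs_of_nonneg (by positivity : (0:ℝ) ≤ π/2)] using this
    rw [h1]
    have hnn : (0:ℝ) ≤ z^n / n.factorial := by positivity
    exact mul_le_mul_of_nonneg_left h2 hnn
  have hseven : Summable (fun k => g (2*k)) :=
    hgs.comp_injective (fun a b h => by omega)
  have hsodd : Summable (fun k => g (2*k+1)) :=
    hgs.comp_injective (fun a b h => by omega)
  rw [← tsum_even_add_odd hseven hsodd]
  have heven : ∀ k : ℕ, g (2*k) =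
      π/2 * ((z/2)^(2*k+0) / ((k.factorial:ℝ) * ((k+0).factorial : ℝ))) := by
    intro k
    rw [hgdef]
    simp only [add_zero]
    rw [wallis_even k, Even.neg_pow ⟨k, by ring⟩ z]
    have hzp : ((z:ℝ)/2)^(2*k) = z^(2*k)/(4^k) := by
      rw [div_pow]; congr 1; rw [pow_mul]; norm_num
    rw [hzp]
    have hf : (k.factorial : ℝ) ≠ 0 := Nat.cast_ne_zero.mpr k.factorial_ne_zero
    have hf2 : ((2*k).factorial : ℝ) ≠ 0 := Nat.cast_ne_zero.mpr (2*k).factorial_ne_zero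
    have h4 : (4:ℝ)^k ≠ 0 := by positivity
    field_simp
  have hodd : ∀ k : ℕ, g (2*k+1) =
      -(π/2) * ((z/2) ^ (2 * (k:ℝ) + 0 + 1) /
        (Real.Gamma ((k:ℝ) + 3/2) * Real.Gamma ((k:ℝ) + 0 + 3/2))) := by
    intro k
    have hrp : ((z:ℝ)/2) ^ (2 * (k:ℝ) + 0 + 1) = (z/2)^(2*k+1 : ℕ) := by
      rw [show (2 * (k:ℝ) + 0 + 1) = ((2*k+1 : ℕ) : ℝ) by push_cast; ring, Real.rpow_natCast]
    have hΓ : Real.Gamma ((k:ℝ) + 3/2) * Real.Gamma ((k:ℝ) + 0 + 3/2)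
        = π * ((2*k+1).factorial:ℝ)^2 / (4^k * (k.factorial:ℝ) * 2)^2 := by
      rw [show (k:ℝ) + 0 + 3/2 = (k:ℝ) + 3/2 by ring, gamma_add_three_halves,
        div_mul_div_comm, mul_mul_mul_comm, Real.mul_self_sqrt pi_pos.le, ← sq, ← sq]
    rw [hgdef]
    beta_reduce
    rw [wallis_odd k, Odd.neg_pow ⟨k, by ring⟩ z, hrp, hΓ]
    have hzp : ((z:ℝ)/2)^(2*k+1) = z^(2*k+1)/(2*4^k) := by
      rw [div_pow]
      congr 1
      rw [pow_succ, pow_mul]; norm_num; ring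
    rw [hzp]
    have hf : (k.factorial : ℝ) ≠ 0 := Nat.cast_ne_zero.mpr k.factorial_ne_zero
    have hf2 : ((2*k+1).factorial : ℝ) ≠ 0 := Nat.cast_ne_zero.mpr (2*k+1).factorial_ne_zero
    have h4 : (4:ℝ)^k ≠ 0 := by positivity
    have hπ : (π:ℝ) ≠ 0 := pi_ne_zero
    field_simp
  rw [tsum_congr heven, tsum_congr hodd, tsum_mul_left, tsum_mul_left]
  rw [besselI, struveL]
  ring

lemma subst_sin (r μ : ℝ) (hr : 0 < r) (hμ : 0 < μ) :
    (∫ y in (0:ℝ)..r,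
        (2 * μ * r / Real.sqrt (r ^ 2 - y ^ 2)) * Real.exp (-2 * μ * Real.sqrt (r ^ 2 - y ^ 2)))
    = ∫ θ in (0:ℝ)..(π/2), 2*μ*r * Real.exp (-(2*r*μ) * Real.cos θ) := by
  have hsub : Set.Ioo (0:ℝ) (π/2) ⊆ Set.Icc (-(π/2)) (π/2) := by
    intro x hx
    exact ⟨by nlinarith [hx.1, pi_pos], hx.2.le⟩
  have himg : (fun θ : ℝ => r * Real.sin θ) '' Set.Ioo 0 (π/2) = Set.Ioo 0 r := by
    ext y
    constructor
    · rintro ⟨θ, ⟨h1, h2⟩, rfl⟩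
      have hs1 : 0 < Real.sin θ := Real.sin_pos_of_pos_of_lt_pi h1 (by nlinarith [pi_pos])
      have hs2 : Real.sin θ < 1 := by
        have := Real.strictMonoOn_sin (hsub ⟨h1, h2⟩)
          ⟨by nlinarith [pi_pos], le_refl _⟩ h2
        simpa using this
      simp only [Set.mem_Ioo]
      exact ⟨by positivity, by nlinarith⟩
    · rintro ⟨h1, h2⟩
      have hd1 : (0:ℝ) ≤ y / r := by positivity
      have hd2 : y / r < 1 := (div_lt_one hr).mpr h2
      refine ⟨Real.arcsin (y/r), ⟨Real.arcsin_pos.mpr (by positivity),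
        Real.arcsin_lt_pi_div_two.mpr hd2⟩, ?_⟩
      show r * Real.sin (Real.arcsin (y/r)) = y
      rw [Real.sin_arcsin (by linarith) hd2.le]
      field_simp
  have hderiv : ∀ θ ∈ Set.Ioo (0:ℝ) (π/2), HasDerivWithinAt (fun θ => r * Real.sin θ)
      (r * Real.cos θ) (Set.Ioo 0 (π/2)) θ :=
    fun θ _ => ((Real.hasDerivAt_sin θ).const_mul r).hasDerivWithinAt
  have hinj : Set.InjOn (fun θ => r * Real.sin θ) (Set.Ioo 0 (π/2)) := by
    intro a ha b hb hab
    have : Real.sin a = Real.sin b := by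
      have := hab
      simp only at this
      exact mul_left_cancel₀ hr.ne' this
    exact Real.injOn_sin (hsub ha) (hsub hb) this
  rw [intervalIntegral.integral_of_le hr.le, MeasureTheory.integral_Ioc_eq_integral_Ioo, ← himg,
    MeasureTheory.integral_image_eq_integral_abs_deriv_smul measurableSet_Ioo hderiv hinj]
  rw [intervalIntegral.integral_of_le (by positivity), MeasureTheory.integral_Ioc_eq_integral_Ioo]
  apply MeasureTheory.setIntegral_congr_fun measurableSet_Ioo
  intro θ hθ
  have hcos : 0 < Real.cos θ := Real.cos_pos_of_mem_Ioo ⟨by nlinarith [hθ.1, pi_pos], hθ.2⟩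
  have hsq : Real.sqrt (r^2 - (r*Real.sin θ)^2) = r * Real.cos θ := by
    have h : r^2 - (r*Real.sin θ)^2 = (r*Real.cos θ)^2 := by
      have := Real.sin_sq_add_cos_sq θ
      nlinarith
    rw [h, Real.sqrt_sq (by positivity)]
  have hne : r * Real.cos θ ≠ 0 := by positivity
  simp only [smul_eq_mul, hsq, abs_of_pos (by positivity : (0:ℝ) < r * Real.cos θ)]
  have harg : -2 * μ * (r * Real.cos θ) = -(2*r*μ) * Real.cos θ := by ring
  rw [harg]
  field_simp

theorem integral_deriv_exp_sqrt_eq_bessel_struve (r μ : ℝ) (hr : 0 < r) (hμ : 0 < μ) :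
    ∫ y in (0:ℝ)..r,
        (2 * μ * r / Real.sqrt (r ^ 2 - y ^ 2)) * Real.exp (-2 * μ * Real.sqrt (r ^ 2 - y ^ 2)) =
      (π * r * μ) * (besselI 0 (2 * r * μ) - struveL 0 (2 * r * μ)) := by
  rw [subst_sin r μ hr hμ]
  rw [intervalIntegral.integral_const_mul (2*μ*r) (fun θ => Real.exp (-(2*r*μ) * Real.cos θ))]
  rw [integral_exp_neg_cos (2*r*μ) (by positivity)]
  ring
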